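/- Let a₁,a₂ be orthonormal vectors in ℂ^d, b₁,b₂ orthonormal vectors in ℂ^d, c₁,c₂ ∈ ℂ, and let ψ : Fin d × Fin d → ℂ be the Schmidt rank ≤ 2 vector ψ(i,k) = c₁·a₁(i)·b₁(k) + c₂·a₂(i)·b₂(k). Let V be the d×d matrix V_{k,i} = c₁·b₁(k)·a₁(i) + c₂·b₂(k)·a₂(i) (a matrix of rank at most 2), and define the map Λ(X) = (V·X·V†)ᵀ. Then (|ψ⟩⟨ψ|)^{T_B} = d·(1⊗Λ)(P₊), i.e. the Jamiołkowski operator of the two-decomposable map Λ is exactly the distillation witness |ψ⟩⟨ψ|^{T_B}. -/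

import Mathlib

open Matrix Kronecker BigOperators
open scoped ComplexOrder

noncomputable section

/-- `d × d` complex matrices. -/
abbrev Mat (d : ℕ) := Matrix (Fin d) (Fin d) ℂ

/-- Matrices on `ℂ^d ⊗ ℂ^d`, indexed by `Fin d × Fin d`. -/
abbrev Mat2 (d : ℕ) := Matrix (Fin d × Fin d) (Fin d × Fin d) ℂ

/-- Partial transpose on Bob's system: `(M^{T_B})_{(i,k),(j,l)} = M_{(i,l),(j,k)}`. -/
def ptB {d : ℕ} (M : Mat2 d) : Mat2 d :=
  Matrix.of fun p q => M (p.1, q.2) (q.1, p.2)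

/-- Schmidt rank of a vector `ψ : Fin d × Fin d → ℂ`: the rank of the `d × d`
matrix with `(i,j)` entry `ψ (i,j)`. -/
def schmidtRank {d : ℕ} (ψ : Fin d × Fin d → ℂ) : ℕ :=
  (Matrix.of fun i j => ψ (i, j) : Mat d).rank

/-- A state: positive semidefinite with trace one. -/
def IsState {d : ℕ} (ρ : Mat2 d) : Prop := ρ.PosSemidef ∧ ρ.trace = 1

/-- One-distillability: some Schmidt-rank-≤2 vector has negative expectation on `ρ^{T_B}`. -/
def OneDistillable {d : ℕ} (ρ : Mat2 d) : Prop :=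
  ∃ ψ : Fin d × Fin d → ℂ, schmidtRank ψ ≤ 2 ∧
    (star ψ ⬝ᵥ (ptB ρ).mulVec ψ).re < 0

/-- The rank-one matrix `|ψ⟩⟨ψ|`, with entries `ψ x * conj (ψ y)`. -/
def outer {d : ℕ} (ψ : Fin d × Fin d → ℂ) : Mat2 d :=
  Matrix.vecMulVec ψ (star ψ)

/-- The maximally entangled projector `P₊`, `(P₊)_{(i,k),(j,l)} = (1/d)·δ_{ik}·δ_{jl}`. -/
def Pplus (d : ℕ) : Mat2 d :=
  Matrix.of fun p q =>
    ((if p.1 = p.2 then (1 : ℂ) else 0) * (if q.1 = q.2 then (1 : ℂ) else 0)) / d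

/-- The flip operator `V_{(i,k),(j,l)} = δ_{il}·δ_{jk}`. -/
def flipOp (d : ℕ) : Mat2 d :=
  Matrix.of fun p q => if p.1 = q.2 ∧ q.1 = p.2 then (1 : ℂ) else 0

/-- The operator `Z = Σ_i |ii⟩⟨ii|`, `Z_{(i,k),(j,l)} = δ_{ik}·δ_{jl}·δ_{ij}`. -/
def Zop (d : ℕ) : Mat2 d :=
  Matrix.of fun p q => if p.1 = p.2 ∧ q.1 = q.2 ∧ p.1 = q.1 then (1 : ℂ) else 0

/-- Partial trace over Alice: `(Tr_A M)_{k,l} = Σ_i M_{(i,k),(i,l)}`. -/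
def trA {d : ℕ} (M : Mat2 d) : Mat d :=
  Matrix.of fun k l => ∑ i, M (i, k) (i, l)

/-- Alice's reduced state: `(ρ_A)_{i,j} = Σ_k ρ_{(i,k),(j,k)}`. -/
def redA {d : ℕ} (ρ : Mat2 d) : Mat d :=
  Matrix.of fun i j => ∑ k, ρ (i, k) (j, k)

/-- Bob's reduced state: `(ρ_B)_{k,l} = Σ_i ρ_{(i,k),(i,l)}`. -/
def redB {d : ℕ} (ρ : Mat2 d) : Mat d := trA ρ

/-- `(1 ⊗ Λ)(M)`, acting with `Λ` on Bob's blocks. -/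
def idTensor {d : ℕ} (Λ : Mat d → Mat d) (M : Mat2 d) : Mat2 d :=
  Matrix.of fun p q => Λ (Matrix.of fun k l => M (p.1, k) (q.1, l)) p.2 q.2

/-- `(Λ ⊗ 1)(M)`, acting with `Λ` on Alice's blocks. -/
def tensorId {d : ℕ} (Λ : Mat d → Mat d) (M : Mat2 d) : Mat2 d :=
  Matrix.of fun p q => Λ (Matrix.of fun i j => M (i, p.2) (j, q.2)) p.1 q.1

/-- `(1_k ⊗ Λ)(M)` for `M` indexed by `Fin k × Fin d`. -/
def idTensorK {d : ℕ} (k : ℕ) (Λ : Mat d → Mat d)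
    (M : Matrix (Fin k × Fin d) (Fin k × Fin d) ℂ) :
    Matrix (Fin k × Fin d) (Fin k × Fin d) ℂ :=
  Matrix.of fun p q => Λ (Matrix.of fun m n => M (p.1, m) (q.1, n)) p.2 q.2

/-- Two-decomposable maps: `Λ(X) = Σᵢ Vᵢ · Xᵀ · Vᵢ†` with each `Vᵢ` of rank at most 2. -/
def TwoDecomposable {d : ℕ} (Λ : Mat d → Mat d) : Prop :=
  ∃ (n : ℕ) (V : Fin n → Mat d), (∀ i, (V i).rank ≤ 2) ∧
    ∀ X : Mat d, Λ X = ∑ i, V i * Xᵀ * (V i)ᴴ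

/-- The diagonal part of a matrix (off-diagonal entries set to zero). -/
def diagPart {d : ℕ} (X : Mat d) : Mat d := Matrix.diagonal fun i => X i i

/-- the Jamiołkowski operator of `Λ(X) = (V·X·V†)ᵀ` with
`V = c₁|b₁⟩⟨a₁| + c₂|b₂⟩⟨a₂|` is the witness `|ψ⟩⟨ψ|^{T_B}`. -/
theorem witness_of_rank_two_map (d : ℕ) (hd : 2 ≤ d)
    (a₁ a₂ b₁ b₂ : Fin d → ℂ)
    (ha₁ : star a₁ ⬝ᵥ a₁ = 1) (ha₂ : star a₂ ⬝ᵥ a₂ = 1) (ha₁₂ : star a₁ ⬝ᵥ a₂ = 0)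
    (hb₁ : star b₁ ⬝ᵥ b₁ = 1) (hb₂ : star b₂ ⬝ᵥ b₂ = 1) (hb₁₂ : star b₁ ⬝ᵥ b₂ = 0)
    (c₁ c₂ : ℂ) (ψ : Fin d × Fin d → ℂ)
    (hψ : ψ = fun p => c₁ * a₁ p.1 * b₁ p.2 + c₂ * a₂ p.1 * b₂ p.2)
    (V : Mat d)
    (hV : V = Matrix.of fun k i => c₁ * b₁ k * a₁ i + c₂ * b₂ k * a₂ i) :
    ptB (outer ψ) = (d : ℂ) • idTensor (fun X => (V * X * Vᴴ)ᵀ) (Pplus d) := by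
  have hd0 : (d : ℂ) ≠ 0 := Nat.cast_ne_zero.mpr (by omega)
  subst hψ hV
  ext ⟨i, k⟩ ⟨j, l⟩
  simp only [ptB, outer, idTensor, Pplus, Matrix.vecMulVec_apply, Matrix.of_apply,
    Matrix.smul_apply, Matrix.transpose_apply, Matrix.mul_apply, Matrix.conjTranspose_apply,
    Pi.star_apply, smul_eq_mul, star_add, star_mul']
  simp only [mul_ite, ite_mul, mul_zero, zero_mul, mul_one, one_mul, mul_div_assoc,
    Finset.sum_div, Finset.sum_ite_eq, Finset.mem_univ, if_true, ← Finset.sum_div]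
  simp only [div_eq_mul_inv, ite_mul, zero_mul, Finset.sum_ite_eq, Finset.mem_univ, if_true,
    mul_ite, mul_zero, add_mul, Finset.sum_add_distrib, Finset.mul_sum]
  simp only [Finset.sum_ite_irrel, Finset.sum_const_zero, mul_ite, ite_mul, mul_zero, zero_mul,
    Finset.sum_add_distrib, Finset.sum_ite_eq, Finset.mem_univ, if_true]
  field_simp
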